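/- If ∇C = 0 on a connected pseudo-Riemannian manifold of dimension n ≥ 3, then the scalar curvature τ is constant and the manifold is locally symmetric. -/

import Mathlib

/-- If `∇C = 0` on a connected pseudo-Riemannian manifold of dimension
`n ≥ 3`, then the scalar curvature is constant (`dτ = 0`) and the manifold is
locally symmetric (`∇R = 0`). Data and bridging identities as in the paper:
`∇C = ∇R - (dτ/(n(n-1))) ⊗ G`, the second Bianchi identity, and `dτ` arising as a
metric contraction of `∇R`. -/
theorem concircularly_symmetric_implies_locally_symmetric
    {M V : Type*} [AddCommGroup V] [Module ℝ V]
    (n : ℕ) (hn : 3 ≤ n)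
    (g : M → V → V → ℝ)
    (G : M → V → V → V → V → ℝ)
    (hG : ∀ p X Y Z W, G p X Y Z W = g p X Z * g p Y W - g p Y Z * g p X W)
    (τ : M → ℝ)
    (DR : M → V → V → V → V → V → ℝ)
    (Dτ : M → V → ℝ)
    (DC : M → V → V → V → V → V → ℝ)
    (hDC : ∀ p ζ X Y Z W, DC p ζ X Y Z W =
      DR p ζ X Y Z W - (Dτ p ζ / ((n : ℝ) * ((n : ℝ) - 1))) * G p X Y Z W)
    (hDRskew : ∀ p ζ X Y Z W, DR p ζ X Y Z W = - DR p ζ Y X Z W)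
    (hDRpair : ∀ p ζ X Y Z W, DR p ζ X Y Z W = DR p ζ Z W X Y)
    (hBianchi2 : ∀ p U X Y Z W,
      DR p U X Y Z W + DR p X Y U Z W + DR p Y U X Z W = 0)
    (e : M → Fin n → V) (ε : Fin n → ℝ)
    (hε : ∀ i, ε i = 1 ∨ ε i = -1)
    (hortho : ∀ p i j, g p (e p i) (e p j) = if i = j then ε i else 0)
    (hDτ : ∀ p ζ, Dτ p ζ =
      ∑ i, ∑ j, ε i * ε j * DR p ζ (e p i) (e p j) (e p i) (e p j))
    (hCsym : ∀ p ζ X Y Z W, DC p ζ X Y Z W = 0) :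
    (∀ p ζ, Dτ p ζ = 0) ∧ (∀ p ζ X Y Z W, DR p ζ X Y Z W = 0) := by

  have hc : ((n:ℝ) * ((n:ℝ) - 1)) ≠ 0 := by
    have h3 : (3:ℝ) ≤ (n:ℝ) := by exact_mod_cast hn
    nlinarith
  have εnz : ∀ i, ε i ≠ 0 := by
    intro i; rcases hε i with h | h <;> rw [h] <;> norm_num
  have hDR : ∀ p ζ X Y Z W, DR p ζ X Y Z W =
      (Dτ p ζ / ((n:ℝ) * ((n:ℝ) - 1))) * G p X Y Z W := by
    intro p ζ X Y Z W
    have h := hCsym p ζ X Y Z W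
    rw [hDC] at h
    linarith
  have key : ∀ p U X Y Z W,
      Dτ p U * G p X Y Z W + Dτ p X * G p Y U Z W + Dτ p Y * G p U X Z W = 0 := by
    intro p U X Y Z W
    have hb := hBianchi2 p U X Y Z W
    rw [hDR, hDR, hDR] at hb
    have hb2 := congrArg (fun t => t * ((n:ℝ) * ((n:ℝ) - 1))) hb
    simp only [add_mul, zero_mul] at hb2
    field_simp at hb2
    have hn1 : ((n:ℝ) - 1) ≠ 0 := by
      have h3 : (3:ℝ) ≤ (n:ℝ) := by exact_mod_cast hn
      linarith
    rwa [mul_div_cancel_left₀ _ hn1] at hb2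
  have keyb : ∀ p ζ (a b : Fin n), a ≠ b →
      Dτ p ζ * (ε a * ε b) - Dτ p (e p a) * (g p ζ (e p a) * ε b)
        - Dτ p (e p b) * (ε a * g p ζ (e p b)) = 0 := by
    intro p ζ a b hab
    have h := key p ζ (e p a) (e p b) (e p a) (e p b)
    rw [hG, hG, hG] at h
    rw [hortho, hortho, hortho, hortho] at h
    simp only [if_pos rfl, if_neg hab, if_neg hab.symm] at h
    ring_nf at h ⊢
    simp only [if_true] at h ⊢
    linarith
  have hgen : ∀ p (c a b : Fin n), a ≠ b → c ≠ a → c ≠ b → Dτ p (e p c) = 0 := by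
    intro p c a b hab hca hcb
    have h := keyb p (e p c) a b hab
    rw [hortho, hortho, if_neg hca, if_neg hcb] at h
    have h2 : Dτ p (e p c) * (ε a * ε b) = 0 := by linarith
    rcases mul_eq_zero.mp h2 with h1 | h1
    · exact h1
    · exact absurd h1 (mul_ne_zero (εnz a) (εnz b))
  have hbasis : ∀ p (c : Fin n), Dτ p (e p c) = 0 := by
    intro p c
    by_cases h0 : c = ⟨0, by omega⟩
    · exact hgen p c ⟨1, by omega⟩ ⟨2, by omega⟩ (by simp [Fin.ext_iff])
        (by simp [h0, Fin.ext_iff]) (by simp [h0, Fin.ext_iff])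
    · by_cases h2 : c = ⟨2, by omega⟩
      · exact hgen p c ⟨0, by omega⟩ ⟨1, by omega⟩ (by simp [Fin.ext_iff])
          (by simp [h2, Fin.ext_iff]) (by simp [h2, Fin.ext_iff])
      · exact hgen p c ⟨0, by omega⟩ ⟨2, by omega⟩ (by simp [Fin.ext_iff]) h0 h2
  have hzero : ∀ p ζ, Dτ p ζ = 0 := by
    intro p ζ
    have h01 : (⟨0, by omega⟩ : Fin n) ≠ ⟨1, by omega⟩ := by simp [Fin.ext_iff]
    have h := keyb p ζ ⟨0, by omega⟩ ⟨1, by omega⟩ h01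
    rw [hbasis, hbasis] at h
    have : Dτ p ζ * (ε ⟨0, by omega⟩ * ε ⟨1, by omega⟩) = 0 := by linarith
    rcases mul_eq_zero.mp this with h1 | h1
    · exact h1
    · exact absurd h1 (mul_ne_zero (εnz _) (εnz _))
  refine ⟨hzero, fun p ζ X Y Z W => ?_⟩
  rw [hDR, hzero]
  simp
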